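/- Let μ be a finite Borel measure on a Banach space X with μ(X ∖ B_1(0)) = 0, and suppose β^k_μ(x,r) = 0 for some ball, say β^k_μ(0,1) = 0. Then there exists a k-dimensional affine subspace p + V of X such that μ(B_1(0) ∖ (p + V)) = 0. -/

import Mathlib

open Metric MeasureTheory
open scoped ENNReal NNReal

/-- The square of the `k`-dimensional Jones `β`-number of a measure `μ` at
center `x` and scale `r`. -/
noncomputable def betaSq (k : ℕ) {X : Type} [NormedAddCommGroup X]
    [NormedSpace ℝ X] [MeasurableSpace X] (μ : Measure X) (x : X) (r : ℝ) : ℝ≥0∞ :=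
  ⨅ (p : X) (V : Submodule ℝ X) (_ : Module.finrank ℝ V = k),
    (ENNReal.ofReal r ^ (k + 2))⁻¹ *
      ∫⁻ z in ball x r,
        ENNReal.ofReal ((Metric.infDist z ((fun w => p + w) '' (V : Set X))) ^ 2) ∂μ

/-- Extend a finite-dimensional submodule of rank `≤ k` to one of rank exactly `k`,
provided some rank-`k` submodule exists. -/
lemma aux_extend {X : Type} [AddCommGroup X] [Module ℝ X] (k : ℕ)
    (V₀ : Submodule ℝ X) (hV₀ : Module.finrank ℝ V₀ = k) :
    ∀ n (W : Submodule ℝ X), FiniteDimensional ℝ W → Module.finrank ℝ W + n = k →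
      ∃ V : Submodule ℝ X, W ≤ V ∧ Module.finrank ℝ V = k := by
  intro n
  induction n with
  | zero => exact fun W hWfin h => ⟨W, le_rfl, by simpa using h⟩
  | succ m ih =>
    intro W hWfin h
    have hxe : ∃ x : X, x ∉ W := by
      by_contra hc
      push_neg at hc
      have hWtop : W = ⊤ := eq_top_iff.2 fun x _ => hc x
      haveI : FiniteDimensional ℝ (⊤ : Submodule ℝ X) := hWtop ▸ hWfin
      haveI : FiniteDimensional ℝ X := Submodule.topEquiv.finiteDimensional
      have h1 : Module.finrank ℝ V₀ ≤ Module.finrank ℝ X := V₀.finrank_le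
      have h2 : Module.finrank ℝ W = Module.finrank ℝ X := by
        rw [hWtop]; exact finrank_top ℝ X
      omega
    obtain ⟨x, hx⟩ := hxe
    have hx0 : x ≠ 0 := fun h0 => hx (h0 ▸ W.zero_mem)
    haveI := hWfin
    haveI : FiniteDimensional ℝ (Submodule.span ℝ {x}) :=
      FiniteDimensional.span_of_finite ℝ (Set.finite_singleton x)
    have hinf : W ⊓ (ℝ ∙ x) = ⊥ := by
      rw [eq_bot_iff]
      rintro y ⟨hyW, hys⟩
      obtain ⟨c, rfl⟩ := Submodule.mem_span_singleton.1 hys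
      rcases eq_or_ne c 0 with rfl | hc
      · simp
      · exact absurd ((W.smul_mem_iff hc).1 hyW) hx
    have hsum := Submodule.finrank_sup_add_finrank_inf_eq W (ℝ ∙ x)
    rw [hinf, finrank_bot, add_zero, finrank_span_singleton hx0] at hsum
    obtain ⟨Vv, hWle, hVk'⟩ := ih (W ⊔ (ℝ ∙ x)) inferInstance (by omega)
    exact ⟨Vv, le_trans le_sup_left hWle, hVk'⟩

/-- If a set contains no linearly independent family of `k+1` vectors, its span has
finrank at most `k`. -/
lemma aux_span {X : Type} [AddCommGroup X] [Module ℝ X] (k : ℕ) (T : Set X)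
    (hT : ∀ v : Fin (k + 1) → X, (∀ i, v i ∈ T) → ¬ LinearIndependent ℝ v) :
    FiniteDimensional ℝ (Submodule.span ℝ T) ∧
      Module.finrank ℝ (Submodule.span ℝ T) ≤ k := by
  obtain ⟨b, hbT, hspan, hbi⟩ := exists_linearIndependent ℝ T
  have hcard : ∀ t : Finset X, ↑t ⊆ b → t.card ≠ k + 1 := by
    intro t ht hc
    have hcardt : Fintype.card {x // x ∈ t} = k + 1 := by simp [hc]
    let e : Fin (k + 1) ≃ {x // x ∈ t} := (Fintype.equivFinOfCardEq hcardt).symm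
    let f : Fin (k + 1) → b := fun i => ⟨(e i : X), ht (e i).2⟩
    have hfinj : Function.Injective f := by
      intro i j hij
      have hval := congrArg Subtype.val hij
      exact e.injective (Subtype.ext hval)
    have hvi : LinearIndependent ℝ (fun i => ((f i : X))) := hbi.comp f hfinj
    exact hT _ (fun i => hbT (f i).2) hvi
  have hbfin : b.Finite := by
    by_contra hinf
    obtain ⟨t, htb, htc⟩ := Set.Infinite.exists_subset_card_eq hinf (k + 1)
    exact hcard t htb htc
  have hble : hbfin.toFinset.card ≤ k := by
    by_contra hgt
    push_neg at hgt
    obtain ⟨t, htsub, htc⟩ := Finset.exists_subset_card_eq hgt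
    exact hcard t (fun x hx => hbfin.mem_toFinset.1 (htsub hx)) htc
  have hbeq : (hbfin.toFinset : Set X) = b := hbfin.coe_toFinset
  haveI : FiniteDimensional ℝ (Submodule.span ℝ b) := by
    rw [← hbeq]; exact FiniteDimensional.span_of_finite ℝ (hbfin.toFinset.finite_toSet)
  constructor
  · rw [← hspan]; infer_instance
  · rw [← hspan]
    calc Module.finrank ℝ (Submodule.span ℝ b)
        = Module.finrank ℝ (Submodule.span ℝ (hbfin.toFinset : Set X)) := by rw [hbeq]
      _ ≤ hbfin.toFinset.card := finrank_span_finset_le_card _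
      _ ≤ k := hble

/-- If the `β`-number of a finite Borel measure supported in the unit ball vanishes,
then the measure is concentrated (in the unit ball) on a single `k`-dimensional
affine subspace. -/
theorem beta_zero_measure_on_plane {X : Type} [NormedAddCommGroup X]
    [NormedSpace ℝ X] [CompleteSpace X] [MeasurableSpace X] [BorelSpace X]
    (k : ℕ) (μ : Measure X) [IsFiniteMeasure μ]
    (hsupp : μ (Set.univ \ ball 0 1) = 0)
    (hβ : betaSq k μ 0 1 = 0) :
    ∃ (p : X) (V : Submodule ℝ X), Module.finrank ℝ V = k ∧
      μ (ball 0 1 \ ((fun w => p + w) '' (V : Set X))) = 0 := by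
  by_cases hcase : k = 0 ∧ ¬ FiniteDimensional ℝ X
  · obtain ⟨rfl, hX⟩ := hcase
    refine ⟨0, ⊤, ?_, ?_⟩
    · rw [finrank_top]
      exact Module.finrank_of_infinite_dimensional hX
    · have : ball (0 : X) 1 \ ((fun w => (0 : X) + w) '' ((⊤ : Submodule ℝ X) : Set X)) = ∅ := by
        apply Set.diff_eq_empty.2
        intro z _
        exact ⟨z, trivial, by simp⟩
      rw [this, measure_empty]
  · have hFD : ∀ U : Submodule ℝ X, Module.finrank ℝ U = k → FiniteDimensional ℝ U := by
      intro U hU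
      rcases Nat.eq_zero_or_pos k with h0 | hpos
      · have hXfd : FiniteDimensional ℝ X := by
          by_contra h; exact hcase ⟨h0, h⟩
        infer_instance
      · exact Module.finite_of_finrank_eq_succ
          (by rw [hU, ← Nat.succ_pred_eq_of_pos hpos])
    -- unfold betaSq
    rw [betaSq] at hβ
    simp only [ENNReal.ofReal_one, one_pow, inv_one, one_mul] at hβ
    set ε : ℕ → ℝ≥0∞ := fun n => ENNReal.ofReal ((1 / ((n : ℝ) + 1)) ^ 2) with hε
    have hεpos : ∀ n, 0 < ε n := by
      intro n
      exact ENNReal.ofReal_pos.2 (by positivity)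
    have H : ∀ n : ℕ, ∃ p : X, ∃ V : Submodule ℝ X, Module.finrank ℝ V = k ∧
        (∫⁻ z in ball (0 : X) 1,
          ENNReal.ofReal ((Metric.infDist z ((fun w => p + w) '' (V : Set X))) ^ 2) ∂μ)
          < 2⁻¹ ^ n * ε n := by
      intro n
      have hpos : 0 < (2⁻¹ : ℝ≥0∞) ^ n * ε n := by
        apply ENNReal.mul_pos
        · exact pow_ne_zero n (ENNReal.inv_ne_zero.2 ENNReal.ofNat_ne_top)
        · exact (hεpos n).ne'
      have h1 : (⨅ (p : X) (V : Submodule ℝ X) (_ : Module.finrank ℝ V = k),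
          ∫⁻ z in ball (0 : X) 1,
            ENNReal.ofReal ((Metric.infDist z ((fun w => p + w) '' (V : Set X))) ^ 2) ∂μ)
          < 2⁻¹ ^ n * ε n := by rw [hβ]; exact hpos
      obtain ⟨p, h2⟩ := iInf_lt_iff.mp h1
      obtain ⟨V, h3⟩ := iInf_lt_iff.mp h2
      obtain ⟨hk, h4⟩ := iInf_lt_iff.mp h3
      exact ⟨p, V, hk, h4⟩
    choose p V hVk hI using H
    set plane : ℕ → Set X := fun n => (fun w => p n + w) '' ((V n : Set X)) with hplane
    have hplane_ne : ∀ n, (plane n).Nonempty := fun n => ⟨p n, 0, (V n).zero_mem, add_zero _⟩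
    set E : ℕ → Set X := fun n =>
      ball (0 : X) 1 ∩ {z | 1 / ((n : ℝ) + 1) ≤ infDist z (plane n)} with hE
    have hcheb : ∀ n, μ (E n) ≤ 2⁻¹ ^ n := by
      intro n
      have hmeas : AEMeasurable (fun z => ENNReal.ofReal (infDist z (plane n) ^ 2))
          (μ.restrict (ball (0 : X) 1)) := by
        exact (ENNReal.continuous_ofReal.comp
          ((continuous_infDist_pt (plane n)).pow 2)).measurable.aemeasurable
      have h1 := mul_meas_ge_le_lintegral₀ hmeas (ε n)
      have h2 : ε n * (μ.restrict (ball (0 : X) 1)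
          {x | ε n ≤ ENNReal.ofReal (infDist x (plane n) ^ 2)}) < ε n * (2⁻¹ ^ n) := by
        refine lt_of_le_of_lt h1 ?_
        rw [mul_comm]
        exact hI n
      have h3 : μ.restrict (ball (0 : X) 1)
          {x | ε n ≤ ENNReal.ofReal (infDist x (plane n) ^ 2)} < 2⁻¹ ^ n :=
        ((ENNReal.mul_right_strictMono (hεpos n).ne' (ENNReal.ofReal_ne_top)).lt_iff_lt).1 h2
      refine le_trans ?_ h3.le
      rw [Measure.restrict_apply' measurableSet_ball]
      apply measure_mono
      rintro z ⟨hz1, hz2⟩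
      refine ⟨?_, hz1⟩
      have h0 : (0 : ℝ) ≤ 1 / ((n : ℝ) + 1) := by positivity
      have hz2' : 1 / ((n : ℝ) + 1) ≤ infDist z (plane n) := hz2
      exact ENNReal.ofReal_le_ofReal (pow_le_pow_left₀ h0 hz2' 2)
    have hL : μ (Filter.limsup E Filter.atTop) = 0 := by
      apply measure_limsup_atTop_eq_zero
      refine ne_top_of_le_ne_top ?_ (ENNReal.tsum_le_tsum hcheb)
      rw [ENNReal.tsum_geometric]
      simp [ENNReal.one_sub_inv_two]
    set S : Set X := ball (0 : X) 1 \ Filter.limsup E Filter.atTop with hS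
    have hSev : ∀ z ∈ S, ∀ᶠ n in Filter.atTop, infDist z (plane n) < 1 / ((n : ℝ) + 1) := by
      rintro z ⟨hz1, hz2⟩
      rw [Filter.mem_limsup_iff_frequently_mem, Filter.not_frequently] at hz2
      filter_upwards [hz2] with n hn
      by_contra hlt
      push_neg at hlt
      exact hn ⟨hz1, hlt⟩
    by_cases hSne : S.Nonempty
    · obtain ⟨z₀, hz₀⟩ := hSne
      set T : Set X := (fun z => z - z₀) '' S with hT
      have key : ∀ v : Fin (k + 1) → X, (∀ i, v i ∈ T) → ¬ LinearIndependent ℝ v := by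
        intro v hvT hvi
        have ho := isOpen_setOf_linearIndependent (𝕜 := ℝ) (E := X) (ι := Fin (k + 1))
        rw [Metric.isOpen_iff] at ho
        obtain ⟨δ, hδ, hball⟩ := ho v hvi
        choose z hzS hzv using hvT
        have hev : ∀ᶠ n in Filter.atTop,
            (infDist z₀ (plane n) < 1 / ((n : ℝ) + 1)
              ∧ ∀ i, infDist (z i) (plane n) < 1 / ((n : ℝ) + 1))
            ∧ 1 / ((n : ℝ) + 1) < δ / 2 := by
          refine Filter.Eventually.and (Filter.Eventually.and (hSev z₀ hz₀) ?_) ?_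
          · exact (Filter.eventually_all).2 fun i => hSev (z i) (hzS i)
          · exact tendsto_one_div_add_atTop_nhds_zero_nat.eventually
              (gt_mem_nhds (by positivity))
        obtain ⟨n, ⟨h₀, hi⟩, hsm⟩ := hev.exists
        obtain ⟨y₀, hy₀mem, hy₀⟩ := (infDist_lt_iff (hplane_ne n)).1 h₀
        have hyi : ∀ i, ∃ y ∈ plane n, dist (z i) y < 1 / ((n : ℝ) + 1) :=
          fun i => (infDist_lt_iff (hplane_ne n)).1 (hi i)
        choose y hymem hy using hyi
        set w : Fin (k + 1) → X := fun i => y i - y₀ with hw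
        have hwV : ∀ i, w i ∈ V n := by
          intro i
          obtain ⟨u, hu, hu'⟩ := hymem i
          obtain ⟨u₀, hu₀, hu₀'⟩ := hy₀mem
          have : w i = u - u₀ := by
            simp only [hw, ← hu', ← hu₀']
            abel
          rw [this]
          exact (V n).sub_mem hu hu₀
        have hwb : w ∈ ball v δ := by
          rw [mem_ball, dist_pi_lt_iff hδ]
          intro i
          have hv : v i = z i - z₀ := (hzv i).symm
          have : dist (w i) (v i) ≤ dist (z i) (y i) + dist z₀ y₀ := by
            rw [hw, hv, dist_eq_norm]
            have : y i - y₀ - (z i - z₀) = (y i - z i) - (y₀ - z₀) := by abel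
            rw [this]
            refine le_trans (norm_sub_le _ _) ?_
            rw [dist_eq_norm, dist_eq_norm]
            rw [norm_sub_rev (y i), norm_sub_rev y₀]
          calc dist (w i) (v i) ≤ dist (z i) (y i) + dist z₀ y₀ := this
            _ < 1 / ((n : ℝ) + 1) + 1 / ((n : ℝ) + 1) := add_lt_add (hy i) hy₀
            _ < δ / 2 + δ / 2 := add_lt_add hsm hsm
            _ = δ := by ring
        have hwi : LinearIndependent ℝ w := hball hwb
        set w' : Fin (k + 1) → V n := fun i => ⟨w i, hwV i⟩ with hw'
        have hwi' : LinearIndependent ℝ w' := by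
          apply LinearIndependent.of_comp ((V n).subtype)
          exact hwi
        haveI := hFD (V n) (hVk n)
        have hcard := hwi'.fintype_card_le_finrank
        rw [hVk n, Fintype.card_fin] at hcard
        omega
      obtain ⟨hfinW, hWle⟩ := aux_span k T key
      obtain ⟨VV, hle, hrank⟩ := aux_extend k (V 0) (hVk 0)
        (k - Module.finrank ℝ (Submodule.span ℝ T)) (Submodule.span ℝ T) hfinW (by omega)
      refine ⟨z₀, VV, hrank, ?_⟩
      have hsub : S ⊆ (fun w => z₀ + w) '' (VV : Set X) := by
        intro zz hzz
        exact ⟨zz - z₀, hle (Submodule.subset_span ⟨zz, hzz, rfl⟩), by simp⟩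
      refine measure_mono_null ?_ hL
      rintro zz ⟨hzz1, hzz2⟩
      by_contra hnot
      exact hzz2 (hsub ⟨hzz1, hnot⟩)
    · refine ⟨p 0, V 0, hVk 0, ?_⟩
      refine measure_mono_null ?_ hL
      rintro zz ⟨hzz1, _⟩
      by_contra hnot
      exact hSne ⟨zz, hzz1, hnot⟩
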